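/- In Ch_{\geq 0}(R) (or in Ch(R)), if a chain map f is a cofibration in the projective (Quillen) model structure and is also a quasi-isomorphism, then f is a chain homotopy equivalence. -/

import Mathlib

/-!
STATEMENT 10: in `Ch_{≥0}(R)`, a map that is a cofibration in the projective
(Quillen) model structure (degreewise split monomorphism with degreewise
projective cokernel) and a quasi-isomorphism is a chain homotopy equivalence.
-/

open CategoryTheory CategoryTheory.Limits

universe u

/-- A chain map is a chain homotopy equivalence if it admits an inverse up to
chain homotopy. -/
def IsChainHomotopyEquiv {R : Type u} [Ring R]
    {X Y : ChainComplex (ModuleCat.{u} R) ℕ} (f : X ⟶ Y) : Prop :=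
  ∃ g : Y ⟶ X, Nonempty (Homotopy (f ≫ g) (𝟙 X)) ∧ Nonempty (Homotopy (g ≫ f) (𝟙 Y))

open HomologicalComplex ZeroObject in
/-- In `Ch_{≥0}(R)`, if a chain map `f` is a cofibration in the projective
(Quillen) model structure — a degreewise split monomorphism with degreewise
projective cokernel — and a quasi-isomorphism, then `f` is a chain homotopy
equivalence. -/
theorem quillen_trivial_cofibration_is_chain_homotopy_equivalence
    {R : Type u} [Ring R] {X Y : ChainComplex (ModuleCat.{u} R) ℕ} (f : X ⟶ Y)
    (hsplit : ∀ n : ℕ, ∃ r : Y.X n ⟶ X.X n, f.f n ≫ r = 𝟙 (X.X n))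
    (hproj : ∀ n : ℕ, Projective (cokernel (f.f n)))
    (hqis : QuasiIso f) :
    IsChainHomotopyEquiv f := by
  classical
  obtain ⟨r, hr⟩ := Classical.axiomOfChoice hsplit
  -- mono f
  haveI hmono : Mono f := Preadditive.mono_of_cancel_zero f (fun {P} g hg => by
    apply HomologicalComplex.hom_ext
    intro n
    have h1 : g.f n ≫ f.f n = 0 := congr_arg (fun φ => HomologicalComplex.Hom.f φ n) hg
    have : g.f n = (g.f n ≫ f.f n) ≫ r n := by rw [Category.assoc, hr n, Category.comp_id]
    simpa [h1] using this)
  -- the short exact sequence  X → Y → K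
  set K := cokernel f with hK
  set p : Y ⟶ K := cokernel.π f with hp
  let S : ShortComplex (ChainComplex (ModuleCat.{u} R) ℕ) :=
    ShortComplex.mk f p (cokernel.condition f)
  have hS : S.ShortExact :=
    { exact := S.exact_of_g_is_cokernel (cokernelIsCokernel f)
      mono_f := hmono
      epi_g := by dsimp [S]; infer_instance }
  -- the short exact sequence Y → Y → 0
  let S₂ : ShortComplex (ChainComplex (ModuleCat.{u} R) ℕ) :=
    ShortComplex.mk (𝟙 Y) (0 : Y ⟶ 0) (by simp)
  have hepi0 : Epi (S₂.g) := ⟨fun u v _ => (isZero_zero _).eq_of_src u v⟩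
  have hS₂ : S₂.ShortExact :=
    { exact := S₂.exact_of_f_is_kernel (KernelFork.IsLimit.ofId _ rfl)
      mono_f := by dsimp [S₂]; infer_instance
      epi_g := hepi0 }
  let φ : S ⟶ S₂ :=
    { τ₁ := f
      τ₂ := 𝟙 Y
      τ₃ := 0
      comm₁₂ := by simp [S, S₂]
      comm₂₃ := by simp [S, S₂] }
  have hq3 : QuasiIso φ.τ₃ :=
    HomologySequence.quasiIso_τ₃ φ hS hS₂ hqis inferInstance
  have hzero : ∀ n : ℕ, IsZero (K.homology n) := fun n => by
    have h1 : IsIso (homologyMap φ.τ₃ n) := by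
      rw [← quasiIsoAt_iff_isIso_homologyMap]
      exact hq3.quasiIsoAt n
    exact IsZero.of_iso
      ((homologyFunctor (ModuleCat.{u} R) (ComplexShape.down ℕ) n).map_isZero (isZero_zero _))
      (@asIso _ _ _ _ (homologyMap φ.τ₃ n) h1)
  have hex : ∀ n : ℕ, (K.sc' (n+1) n (n-1)).Exact := fun n => by
    have := (K.exactAt_iff_isZero_homology n).2 (hzero n)
    rw [K.exactAt_iff' (n+1) n (n-1) (ChainComplex.prev ℕ n)
      (by cases n with
          | zero => simpa using ChainComplex.next_nat_zero
          | succ m => simpa using ChainComplex.next_nat_succ m)] at this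
    exact this
  haveI hprojK : ∀ n : ℕ, Projective (K.X n) := fun n =>
    Projective.of_iso
      (PreservesCokernel.iso (HomologicalComplex.eval (ModuleCat.{u} R) (ComplexShape.down ℕ) n) f).symm
      (hproj n)
  -- contraction of K
  have hd00 : K.d 0 0 = 0 := K.shape 0 0 (by simp [ComplexShape.down_Rel])
  let zero : K.X 0 ⟶ K.X 1 :=
    (hex 0).liftFromProjective (𝟙 (K.X 0)) (by simp [HomologicalComplex.sc', hd00]; exact Category.id_comp _)
  have h0 : zero ≫ K.d 1 0 = 𝟙 (K.X 0) :=
    (hex 0).liftFromProjective_comp (𝟙 (K.X 0)) _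
  have comm_zero : HomologicalComplex.Hom.f (𝟙 K) 0 = zero ≫ K.d 1 0 := by
    simp [h0]
  have hu1 : (𝟙 (K.X 1) - K.d 1 0 ≫ zero) ≫ K.d 1 0 = 0 := by
    simp [Preadditive.sub_comp, Category.assoc, h0]
  let one : K.X 1 ⟶ K.X 2 :=
    (hex 1).liftFromProjective (𝟙 (K.X 1) - K.d 1 0 ≫ zero) hu1
  have comm_one : HomologicalComplex.Hom.f (𝟙 K) 1 = K.d 1 0 ≫ zero + one ≫ K.d 2 1 := by
    have h1 : (one ≫ K.d 2 1 : K.X 1 ⟶ K.X 1) = 𝟙 (K.X 1) - K.d 1 0 ≫ zero :=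
      (hex 1).liftFromProjective_comp (𝟙 (K.X 1) - K.d 1 0 ≫ zero) hu1
    rw [h1]
    simp
  let H : Homotopy (𝟙 K) 0 :=
    Homotopy.mkInductive (𝟙 K) zero comm_zero one comm_one (fun n ⟨g, g', w⟩ => by
      simp only [HomologicalComplex.id_f] at w
      have hw : g' ≫ K.d (n+2) (n+1) = 𝟙 (K.X (n+1)) - K.d (n+1) n ≫ g := by
        rw [w]; abel
      have hu : (𝟙 (K.X (n+2)) - K.d (n+2) (n+1) ≫ g') ≫ K.d (n+2) (n+1) = 0 := by
        simp [Preadditive.sub_comp, Category.assoc, hw, Preadditive.comp_sub]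
      refine ⟨(hex (n+2)).liftFromProjective (𝟙 (K.X (n+2)) - K.d (n+2) (n+1) ≫ g') hu, ?_⟩
      have h2 : _ ≫ K.d (n+3) (n+2) = 𝟙 (K.X (n+2)) - K.d (n+2) (n+1) ≫ g' :=
        (hex (n+2)).liftFromProjective_comp (𝟙 (K.X (n+2)) - K.d (n+2) (n+1) ≫ g') hu
      simp only [HomologicalComplex.id_f]
      rw [h2]
      abel)
  -- the degreewise section s of p
  let ev : ∀ n : ℕ, HomologicalComplex (ModuleCat.{u} R) (ComplexShape.down ℕ) ⥤ ModuleCat.{u} R :=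
    fun n => HomologicalComplex.eval (ModuleCat.{u} R) (ComplexShape.down ℕ) n
  haveI hcc : ∀ n : ℕ, IsIso (cokernelComparison f (ev n)) := fun n => by
    dsimp [ev]; infer_instance
  let s : ∀ n : ℕ, K.X n ⟶ Y.X n := fun n =>
    @inv _ _ _ _ (cokernelComparison f (ev n)) (hcc n) ≫
      cokernel.desc (f.f n) (𝟙 (Y.X n) - r n ≫ f.f n)
        (by simp [Preadditive.comp_sub, reassoc_of% (hr n)])
  have hfp : ∀ n : ℕ, f.f n ≫ p.f n = 0 := fun n =>
    congr_arg (fun φ => HomologicalComplex.Hom.f φ n) (cokernel.condition f)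
  have hps : ∀ n : ℕ, p.f n ≫ s n = 𝟙 (Y.X n) - r n ≫ f.f n := fun n => by
    have h1 : cokernel.π (f.f n) ≫ cokernelComparison f (ev n) = p.f n :=
      π_comp_cokernelComparison f (ev n)
    have h2 : p.f n ≫ @inv _ _ _ _ (cokernelComparison f (ev n)) (hcc n) = cokernel.π (f.f n) := by
      rw [← h1]
      exact (Category.assoc _ _ _).trans ((congrArg _ (@IsIso.hom_inv_id _ _ _ _ _ (hcc n))).trans (Category.comp_id _))
    dsimp only [s]
    have h3 := cokernel.π_desc (f.f n) (𝟙 (Y.X n) - r n ≫ f.f n)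
      (by simp [Preadditive.comp_sub, reassoc_of% (hr n)])
    rw [← h2] at h3
    exact (Category.assoc _ _ _).symm.trans h3
  haveI hepin : ∀ n : ℕ, Epi (p.f n) := fun n => by
    have : Epi p := by dsimp [p]; infer_instance
    infer_instance
  have hsp : ∀ n : ℕ, s n ≫ p.f n = 𝟙 (K.X n) := fun n => by
    rw [← cancel_epi (p.f n), ← Category.assoc, hps n]
    simp [Preadditive.sub_comp, Category.assoc, hfp n]
  -- homotopy identities for H
  have hcomm0 : 𝟙 (K.X 0) = H.hom 0 1 ≫ K.d 1 0 := by
    have := H.comm 0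
    rw [Homotopy.prevD_chainComplex, Homotopy.dNext_zero_chainComplex] at this
    simpa using this
  have hcommS : ∀ n : ℕ, 𝟙 (K.X (n+1)) =
      K.d (n+1) n ≫ H.hom n (n+1) + H.hom (n+1) (n+2) ≫ K.d (n+2) (n+1) := fun n => by
    have := H.comm (n+1)
    rw [Homotopy.prevD_chainComplex, Homotopy.dNext_succ_chainComplex] at this
    simpa using this
  -- the nullhomotopic map N on Y
  have hrel : ∀ n : ℕ, (ComplexShape.down ℕ).Rel (n+1) n := fun n => by
    simp [ComplexShape.down_Rel]
  let hom : ∀ i j, (ComplexShape.down ℕ).Rel j i → (Y.X i ⟶ Y.X j) :=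
    fun i j _ => p.f i ≫ H.hom i j ≫ s j
  let N : Y ⟶ Y := Homotopy.nullHomotopicMap' hom
  have HN : Homotopy N 0 := Homotopy.nullHomotopy' hom
  have hNf0 : N.f 0 = (p.f 0 ≫ H.hom 0 1 ≫ s 1) ≫ Y.d 1 0 :=
    Homotopy.nullHomotopicMap'_f_of_not_rel_left (hrel 0)
      (fun l hl => by simp [ComplexShape.down_Rel] at hl) hom
  have hNfS : ∀ n : ℕ, N.f (n+1) =
      Y.d (n+1) n ≫ (p.f n ≫ H.hom n (n+1) ≫ s (n+1)) +
        (p.f (n+1) ≫ H.hom (n+1) (n+2) ≫ s (n+2)) ≫ Y.d (n+2) (n+1) := fun n =>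
    Homotopy.nullHomotopicMap'_f (hrel (n+1)) (hrel n) hom
  -- f ≫ N = 0 degreewise
  have hfN : ∀ n : ℕ, f.f n ≫ N.f n = 0 := fun n => by
    cases n with
    | zero =>
      rw [hNf0]
      simp [reassoc_of% (hfp 0)]
    | succ m =>
      rw [hNfS m]
      simp [Preadditive.comp_add, reassoc_of% (hfp (m+1)), reassoc_of% (hfp m),
        HomologicalComplex.Hom.comm_assoc]
  -- N ≫ p = p degreewise
  have hsdp : ∀ n : ℕ, s (n+1) ≫ Y.d (n+1) n ≫ p.f n = K.d (n+1) n := fun n => by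
    rw [← p.comm (n+1) n, ← Category.assoc, hsp (n+1), Category.id_comp]
  have hNp : ∀ n : ℕ, N.f n ≫ p.f n = p.f n := fun n => by
    cases n with
    | zero =>
      calc N.f 0 ≫ p.f 0 = p.f 0 ≫ H.hom 0 1 ≫ (s 1 ≫ Y.d 1 0 ≫ p.f 0) := by
            rw [hNf0]; simp [Category.assoc]
        _ = p.f 0 ≫ H.hom 0 1 ≫ K.d 1 0 := by rw [hsdp 0]
        _ = p.f 0 := by rw [← hcomm0, Category.comp_id]
    | succ m =>
      have t1 : (Y.d (m+1) m ≫ (p.f m ≫ H.hom m (m+1) ≫ s (m+1))) ≫ p.f (m+1) =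
          p.f (m+1) ≫ K.d (m+1) m ≫ H.hom m (m+1) := by
        simp only [Category.assoc, hsp (m+1), Category.comp_id]
        rw [← Category.assoc, ← p.comm (m+1) m, Category.assoc]
      have t2 : ((p.f (m+1) ≫ H.hom (m+1) (m+2) ≫ s (m+2)) ≫ Y.d (m+2) (m+1)) ≫ p.f (m+1) =
          p.f (m+1) ≫ H.hom (m+1) (m+2) ≫ K.d (m+2) (m+1) := by
        simp only [Category.assoc]
        rw [hsdp (m+1)]
      rw [hNfS m, Preadditive.add_comp, t1, t2, ← Preadditive.comp_add]
      rw [show K.d (m+1) m ≫ H.hom m (m+1) + H.hom (m+1) (m+2) ≫ K.d (m+2) (m+1)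
          = 𝟙 (K.X (m+1)) from (hcommS m).symm, Category.comp_id]
  -- the chain map E = 𝟙 Y - N and the homotopy inverse g
  let E : Y ⟶ Y := 𝟙 Y - N
  have hEf : ∀ n : ℕ, E.f n = 𝟙 (Y.X n) - N.f n := fun n => by simp [E]
  have hrf : ∀ n : ℕ, r n ≫ f.f n = 𝟙 (Y.X n) - p.f n ≫ s n := fun n => by
    rw [hps n]; abel
  have hgf : ∀ n : ℕ, ((𝟙 (Y.X n) - N.f n) ≫ r n) ≫ f.f n = E.f n := fun n => by
    rw [Category.assoc, hrf n, hEf n]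
    simp [Preadditive.sub_comp, Preadditive.comp_sub, ← Category.assoc, hNp n]
  haveI hmonon : ∀ n : ℕ, Mono (f.f n) := fun n => by
    have : IsSplitMono (f.f n) := IsSplitMono.mk' ⟨r n, hr n⟩
    infer_instance
  let g : Y ⟶ X :=
    { f := fun n => (𝟙 (Y.X n) - N.f n) ≫ r n
      comm' := fun i j hij => by
        rw [← cancel_mono (f.f j), Category.assoc, ← f.comm i j, ← Category.assoc, hgf i,
          Category.assoc, hgf j, E.comm i j] }
  have hfg : f ≫ g = 𝟙 X := by
    apply HomologicalComplex.hom_ext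
    intro n
    simp only [HomologicalComplex.comp_f, HomologicalComplex.id_f]
    have : f.f n ≫ (𝟙 (Y.X n) - N.f n) ≫ r n = (f.f n - f.f n ≫ N.f n) ≫ r n := by
      simp [Preadditive.comp_sub, Preadditive.sub_comp]
    show f.f n ≫ (𝟙 (Y.X n) - N.f n) ≫ r n = 𝟙 (X.X n)
    rw [this, hfN n, sub_zero, hr n]
  have hgfE : g ≫ f = E := by
    apply HomologicalComplex.hom_ext
    intro n
    exact hgf n
  have hNeq : 𝟙 Y - E = N := by simp [E]
  have hIdE : Homotopy (𝟙 Y) E := Homotopy.equivSubZero.symm ((Homotopy.ofEq hNeq).trans HN)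
  exact ⟨g, ⟨Homotopy.ofEq hfg⟩, ⟨(Homotopy.ofEq hgfE).trans hIdE.symm⟩⟩
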